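/- arXiv:1309.0334 — 2 statements merged into one kernel-verified Lean document; each statement's English description precedes it below -/
import Mathlib

section
/- Let N and n be natural numbers with 2 ≤ n ≤ N, and let y : Fin N → ℝ be a finite population. Define the population mean Ȳ = (1/N)·Σ_{i} y(i) and the population variance S² = (1/(N−1))·Σ_{i} (y(i) − Ȳ)². For a subset s of Fin N of cardinality n, define the sample mean ȳ_s = (1/n)·Σ_{i∈s} y(i) and the sample variance s_y² = (1/(n−1))·Σ_{i∈s} (y(i) − ȳ_s)². Then the average of s_y² over all subsets of Fin N of cardinality n equals S²; that is, the sample variance is an unbiased estimator of the population variance under simple random sampling without replacement. -/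
open Finset

lemma var_pair_aux {α : Type*} (s : Finset α) (y : α → ℝ) (m : ℝ) (hm : m ≠ 0)
    (hcard : (s.card : ℝ) = m) :
    ∑ i ∈ s, (y i - (∑ j ∈ s, y j) / m) ^ 2
      = (∑ i ∈ s, ∑ j ∈ s, (y i - y j) ^ 2) / (2 * m) := by
  have h1 : ∑ i ∈ s, ∑ j ∈ s, (y i - y j) ^ 2
      = 2 * m * (∑ i ∈ s, (y i)^2) - 2 * (∑ i ∈ s, y i)^2 := by
    simp only [sub_sq]
    simp only [Finset.sum_add_distrib, Finset.sum_sub_distrib, Finset.sum_const,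
      ← Finset.mul_sum, ← Finset.sum_mul, nsmul_eq_mul, hcard, sq]
    ring
  rw [h1]
  simp only [sub_sq]
  simp only [Finset.sum_add_distrib, Finset.sum_sub_distrib, Finset.sum_const,
    ← Finset.mul_sum, ← Finset.sum_mul, nsmul_eq_mul, hcard]
  field_simp
  ring

lemma count_pair_aux (N n : ℕ) (hn : 2 ≤ n) (i j : Fin N) (hij : i ≠ j) :
    ((Finset.powersetCard n (Finset.univ : Finset (Fin N))).filter
      (fun s => i ∈ s ∧ j ∈ s)).card = (N - 2).choose (n - 2) := by
  have hcard : ((Finset.univ : Finset (Fin N)) \ {i, j}).card = N - 2 := by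
    rw [card_sdiff_of_subset (by simp)]
    simp [card_insert_of_notMem, hij]
  rw [← hcard, ← Finset.card_powersetCard]
  apply Finset.card_nbij' (fun s => s \ {i, j}) (fun t => t ∪ {i, j})
  · intro s hs
    simp only [mem_coe, mem_filter, mem_powersetCard] at hs
    obtain ⟨⟨hsub, hc⟩, hi, hj⟩ := hs
    rw [mem_coe, mem_powersetCard]
    constructor
    · intro x hx; simp only [mem_sdiff] at hx ⊢; exact ⟨mem_univ x, hx.2⟩
    · rw [card_sdiff_of_subset (by intro x hx; simp at hx; rcases hx with rfl | rfl <;> assumption)]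
      rw [hc]; simp [card_insert_of_notMem, hij]
  · intro t ht
    simp only [mem_coe, mem_powersetCard] at ht
    obtain ⟨hsub, hc⟩ := ht
    have hdisj : Disjoint t ({i, j} : Finset (Fin N)) := by
      rw [disjoint_right]; intro x hx hxt
      have := hsub hxt; simp [hx] at this
    simp only [mem_coe, mem_filter, mem_powersetCard]
    refine ⟨⟨fun x _ => mem_univ x, ?_⟩, ?_, ?_⟩
    · rw [card_union_of_disjoint hdisj, hc]
      have h2 : ({i, j} : Finset (Fin N)).card = 2 := by simp [card_insert_of_notMem, hij]
      rw [h2]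
      omega
    · simp
    · simp
  · intro s hs
    simp only [mem_coe, mem_filter, mem_powersetCard] at hs
    ext x
    simp only [mem_union, mem_sdiff, mem_insert, mem_singleton]
    by_cases hx : x = i ∨ x = j
    · rcases hx with rfl | rfl <;> simp [hs.2.1, hs.2.2]
    · push_neg at hx; simp [hx]
  · intro t ht
    simp only [mem_coe, mem_powersetCard] at ht
    ext x
    simp only [mem_sdiff, mem_union, mem_insert, mem_singleton]
    constructor
    · rintro ⟨h1 | h2, h3⟩
      · exact h1
      · tauto
    · intro hx
      have := ht.1 hx
      simp only [mem_sdiff, mem_insert, mem_singleton] at this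
      tauto

lemma choose_id_aux (N n : ℕ) (hn : 2 ≤ n) (hN : n ≤ N) :
    n * (n - 1) * N.choose n = N * (N - 1) * (N - 2).choose (n - 2) := by
  obtain ⟨n', rfl⟩ : ∃ n', n = n' + 2 := ⟨n - 2, by omega⟩
  obtain ⟨N', rfl⟩ : ∃ N', N = N' + 2 := ⟨N - 2, by omega⟩
  simp only [Nat.add_sub_cancel, show n' + 2 - 1 = n' + 1 from rfl,
    show N' + 2 - 1 = N' + 1 from rfl]
  have h1 := Nat.add_one_mul_choose_eq N' n'
  have h2 := Nat.add_one_mul_choose_eq (N' + 1) (n' + 1)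
  calc (n' + 2) * (n' + 1) * (N' + 2).choose (n' + 2)
      = ((N' + 2).choose (n' + 2) * (n' + 2)) * (n' + 1) := by ring
    _ = ((N' + 2) * (N' + 1).choose (n' + 1)) * (n' + 1) := by rw [← h2]
    _ = (N' + 2) * ((N' + 1).choose (n' + 1) * (n' + 1)) := by ring
    _ = (N' + 2) * ((N' + 1) * N'.choose n') := by rw [← h1]
    _ = (N' + 2) * (N' + 1) * N'.choose n' := by ring

/-- Under simple random sampling without replacement, the sample variance
(with divisor `n-1`) is an unbiased estimator of the population variance
(with divisor `N-1`): its average over all subsets of `Fin N` of cardinality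
`n` equals the population variance. -/
theorem sample_variance_unbiased_srswor
    (N n : ℕ) (hn : 2 ≤ n) (hN : n ≤ N) (y : Fin N → ℝ)
    (Ybar : ℝ) (hYbar : Ybar = (∑ i, y i) / (N : ℝ))
    (S2 : ℝ) (hS2 : S2 = (∑ i, (y i - Ybar) ^ 2) / ((N : ℝ) - 1))
    (ybar : Finset (Fin N) → ℝ)
    (hybar : ∀ s : Finset (Fin N), ybar s = (∑ i ∈ s, y i) / (n : ℝ))
    (sy2 : Finset (Fin N) → ℝ)
    (hsy2 : ∀ s : Finset (Fin N),
      sy2 s = (∑ i ∈ s, (y i - ybar s) ^ 2) / ((n : ℝ) - 1)) :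
    (∑ s ∈ Finset.powersetCard n (Finset.univ : Finset (Fin N)), sy2 s) /
      ((N.choose n : ℕ) : ℝ) = S2 := by
  have hN2 : 2 ≤ N := le_trans hn hN
  set g : Fin N → Fin N → ℝ := fun i j => (y i - y j) ^ 2 with hg
  set T : ℝ := ∑ i, ∑ j, g i j with hT
  set P := Finset.powersetCard n (Finset.univ : Finset (Fin N)) with hP
  set C : ℝ := ((N - 2).choose (n - 2) : ℝ) with hC
  -- nonzero facts
  have hnR : (n : ℝ) ≠ 0 := by positivity
  have hn1R : (n : ℝ) - 1 ≠ 0 := by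
    have : (2 : ℝ) ≤ n := by exact_mod_cast hn
    linarith
  have hNR : (N : ℝ) ≠ 0 := by
    have : (2 : ℝ) ≤ N := by exact_mod_cast hN2
    linarith
  have hN1R : (N : ℝ) - 1 ≠ 0 := by
    have : (2 : ℝ) ≤ N := by exact_mod_cast hN2
    linarith
  have hCnR : ((N.choose n : ℕ) : ℝ) ≠ 0 := by
    have := Nat.choose_pos hN
    positivity
  -- sample variance in terms of pairwise differences
  have hsy2' : ∀ s ∈ P, sy2 s = (∑ i ∈ s, ∑ j ∈ s, g i j) / (2 * n * ((n : ℝ) - 1)) := by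
    intro s hs
    rw [hP, Finset.mem_powersetCard] at hs
    rw [hsy2, hybar, var_pair_aux s y (n : ℝ) hnR (by exact_mod_cast hs.2)]
    rw [div_div]
  -- population variance in terms of pairwise differences
  have hS2' : S2 = T / (2 * N * ((N : ℝ) - 1)) := by
    rw [hS2, hYbar, var_pair_aux Finset.univ y (N : ℝ) hNR (by simp)]
    rw [div_div]
  -- swap sums
  have hswap : ∑ s ∈ P, ∑ i ∈ s, ∑ j ∈ s, g i j = C * T := by
    have step1 : ∀ s : Finset (Fin N), ∑ i ∈ s, ∑ j ∈ s, g i j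
        = ∑ i, ∑ j, if i ∈ s ∧ j ∈ s then g i j else 0 := by
      intro s
      have hinner : ∀ i : Fin N, ∑ j, (if i ∈ s ∧ j ∈ s then g i j else 0)
          = if i ∈ s then ∑ j ∈ s, g i j else 0 := by
        intro i
        by_cases his : i ∈ s
        · simp only [his, true_and, if_true]
          rw [Finset.sum_ite_mem, Finset.univ_inter]
        · simp [his]
      simp only [hinner]
      rw [Finset.sum_ite_mem, Finset.univ_inter]
    calc ∑ s ∈ P, ∑ i ∈ s, ∑ j ∈ s, g i j
        = ∑ s ∈ P, ∑ i, ∑ j, if i ∈ s ∧ j ∈ s then g i j else 0 :=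
          Finset.sum_congr rfl fun s _ => step1 s
      _ = ∑ i, ∑ j, ∑ s ∈ P, if i ∈ s ∧ j ∈ s then g i j else 0 := by
          rw [Finset.sum_comm]
          exact Finset.sum_congr rfl fun i _ => Finset.sum_comm ..
      _ = ∑ i, ∑ j, ((P.filter (fun s => i ∈ s ∧ j ∈ s)).card : ℝ) * g i j := by
          refine Finset.sum_congr rfl fun i _ => Finset.sum_congr rfl fun j _ => ?_
          rw [Finset.sum_ite, Finset.sum_const_zero, add_zero, Finset.sum_const,
            nsmul_eq_mul]
      _ = ∑ i, ∑ j, C * g i j := by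
          refine Finset.sum_congr rfl fun i _ => Finset.sum_congr rfl fun j _ => ?_
          by_cases hij : i = j
          · subst hij; simp [hg]
          · rw [hP, count_pair_aux N n hn i j hij]
      _ = C * T := by rw [hT, Finset.mul_sum]; exact Finset.sum_congr rfl fun i _ => (Finset.mul_sum ..).symm
  -- total sum of sample variances
  have htot : ∑ s ∈ P, sy2 s = C * T / (2 * n * ((n : ℝ) - 1)) := by
    rw [Finset.sum_congr rfl hsy2', ← Finset.sum_div, hswap]
  -- the choose identity over ℝ
  have hid : (n : ℝ) * ((n : ℝ) - 1) * ((N.choose n : ℕ) : ℝ)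
      = (N : ℝ) * ((N : ℝ) - 1) * C := by
    have := choose_id_aux N n hn hN
    have h1 : ((n * (n - 1) * N.choose n : ℕ) : ℝ)
        = ((N * (N - 1) * (N - 2).choose (n - 2) : ℕ) : ℝ) := by exact_mod_cast this
    push_cast [Nat.cast_sub (by omega : 1 ≤ n), Nat.cast_sub (by omega : 1 ≤ N)] at h1
    rw [hC]; linarith
  rw [htot, hS2']
  field_simp
  linear_combination (-T) * hid
end

section
/- Let S_y > 0, S_x > 0 and let A₁, A₂, A₃, A₄, A₅ be real numbers with A₁ > 0 and A₁·A₂ − A₃² > 0. Define F(d₁, d₂) = S_y⁴ + d₁²·S_y⁴·A₁ + d₂²·S_x⁴·A₂ + 2·d₁·d₂·S_y²·S_x²·A₃ − 2·d₁·S_y⁴·A₄ − 2·d₂·S_y²·S_x²·A₅. Then F attains its global minimum at d₁* = (A₂·A₄ − A₃·A₅)/(A₁·A₂ − A₃²) and d₂* = (S_y²/S_x²)·(A₁·A₅ − A₃·A₄)/(A₁·A₂ − A₃²); that is, F(d₁, d₂) ≥ F(d₁*, d₂*) for all real d₁, d₂. -/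
/-- The quadratic MSE function of Gupta and Shabbir's hybrid class of variance
estimators attains its global minimum at the stated optimum constants. -/
theorem gupta_shabbir_mse_min
    (Sy Sx : ℝ) (hSy : Sy > 0) (hSx : Sx > 0)
    (A1 A2 A3 A4 A5 : ℝ) (hA1 : A1 > 0) (hdet : A1 * A2 - A3 ^ 2 > 0)
    (F : ℝ → ℝ → ℝ)
    (hF : ∀ d1 d2 : ℝ, F d1 d2 =
      Sy ^ 4 + d1 ^ 2 * Sy ^ 4 * A1 + d2 ^ 2 * Sx ^ 4 * A2 +
        2 * d1 * d2 * Sy ^ 2 * Sx ^ 2 * A3 - 2 * d1 * Sy ^ 4 * A4 -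
        2 * d2 * Sy ^ 2 * Sx ^ 2 * A5)
    (d1s d2s : ℝ)
    (hd1s : d1s = (A2 * A4 - A3 * A5) / (A1 * A2 - A3 ^ 2))
    (hd2s : d2s = (Sy ^ 2 / Sx ^ 2) * ((A1 * A5 - A3 * A4) / (A1 * A2 - A3 ^ 2))) :
    ∀ d1 d2 : ℝ, F d1 d2 ≥ F d1s d2s := by
  intro d1 d2
  have hD : A1 * A2 - A3 ^ 2 ≠ 0 := ne_of_gt hdet
  have hA1' : A1 ≠ 0 := ne_of_gt hA1
  have hSx' : Sx ≠ 0 := ne_of_gt hSx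
  have key : F d1 d2 - F d1s d2s =
      ((A1 * ((d1 - d1s) * Sy ^ 2) + A3 * ((d2 - d2s) * Sx ^ 2)) ^ 2 +
        (A1 * A2 - A3 ^ 2) * ((d2 - d2s) * Sx ^ 2) ^ 2) / A1 := by
    rw [hF, hF, hd1s, hd2s]
    field_simp
    ring
  have hpos : ((A1 * ((d1 - d1s) * Sy ^ 2) + A3 * ((d2 - d2s) * Sx ^ 2)) ^ 2 +
        (A1 * A2 - A3 ^ 2) * ((d2 - d2s) * Sx ^ 2) ^ 2) / A1 ≥ 0 := by
    apply div_nonneg _ (le_of_lt hA1)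
    have := sq_nonneg (A1 * ((d1 - d1s) * Sy ^ 2) + A3 * ((d2 - d2s) * Sx ^ 2))
    nlinarith [sq_nonneg ((d2 - d2s) * Sx ^ 2)]
  linarith [key ▸ hpos]
end
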